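/- Let V be a finite-dimensional complex inner product space and let S be a self-adjoint positive-definite linear operator on V with eigenvalues μ_1, …, μ_N (listed with multiplicity). Let k be a nonzero real number with 1/k² ≠ μ_i for all i. Let W be the span of all eigenvectors of S with eigenvalue μ_i > 1/k², let P_W be the orthogonal projection onto W, and set T := id_V − 2P_W. Then for all u ∈ V, Re⟨(id_V − k²S)(Tu), u⟩ ≥ γ‖u‖², where γ := min_{1≤i≤N} |1 − k²μ_i| > 0. -/

import Mathlib

/-- Finite-dimensional T-coercivity with explicit constant: if `S` is a self-adjoint
positive-definite operator on a finite-dimensional complex inner product space `V`, with an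
orthonormal basis `e` of eigenvectors with (real) eigenvalues `μ i` (listed with multiplicity),
and `k ≠ 0` is real with `1/k² ≠ μ i` for all `i`, then with `W` the span of the eigenvectors
with eigenvalue `> 1/k²`, `P_W` the orthogonal projection onto `W` and `T := id - 2 P_W`, we
have `Re ⟨(id - k²S)(Tu), u⟩ ≥ γ ‖u‖²` for all `u`, where
`γ := min_i |1 - k² μ i| > 0`. -/
theorem discrete_tcoercivity {V : Type*} [NormedAddCommGroup V] [InnerProductSpace ℂ V]
    [FiniteDimensional ℂ V]
    (S : V →ₗ[ℂ] V) (hSsym : S.IsSymmetric)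
    (hSpos : ∀ u : V, u ≠ 0 → 0 < (inner ℂ (S u) u : ℂ).re)
    (N : ℕ) (hN : 0 < N) (μ : Fin N → ℝ)
    (e : OrthonormalBasis (Fin N) ℂ V)
    (heig : ∀ i : Fin N, S (e i) = (μ i : ℂ) • e i)
    (k : ℝ) (hk : k ≠ 0) (hknotev : ∀ i : Fin N, 1 / k ^ 2 ≠ μ i)
    (W : Submodule ℂ V)
    (hW : W = Submodule.span ℂ {x : V | ∃ i : Fin N, 1 / k ^ 2 < μ i ∧ x = e i}) :
    0 < Finset.univ.inf' ⟨⟨0, hN⟩, Finset.mem_univ _⟩ (fun i => |1 - k ^ 2 * μ i|) ∧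
    ∀ u : V,
      Finset.univ.inf' ⟨⟨0, hN⟩, Finset.mem_univ _⟩ (fun i => |1 - k ^ 2 * μ i|) * ‖u‖ ^ 2 ≤
        (inner ℂ
          ((u - (2 : ℂ) • (W.subtypeL.comp W.orthogonalProjection) u) -
            (k : ℂ) ^ 2 • S (u - (2 : ℂ) • (W.subtypeL.comp W.orthogonalProjection) u))
          u : ℂ).re := by
  classical
  have hk2 : (0:ℝ) < k ^ 2 := by positivity
  set γ := Finset.univ.inf' ⟨⟨0, hN⟩, Finset.mem_univ _⟩ (fun i => |1 - k ^ 2 * μ i|) with hγ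
  have hne : ∀ i : Fin N, 1 - k ^ 2 * μ i ≠ 0 := by
    intro i h
    apply hknotev i
    field_simp
    linarith
  have hγpos : 0 < γ := by
    rw [hγ]; refine (Finset.lt_inf'_iff _).2 ?_
    intro i _
    exact abs_pos.mpr (hne i)
  refine ⟨hγpos, fun u => ?_⟩
  set c : Fin N → ℂ := fun i => e.repr u i with hc
  set I : Finset (Fin N) := Finset.univ.filter (fun i => 1 / k ^ 2 < μ i) with hI
  -- the projection
  have hproj : ((W.orthogonalProjection u : W) : V) = ∑ i ∈ I, c i • e i := by
    apply Submodule.eq_starProjection_of_mem_of_inner_eq_zero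
    · exact Submodule.sum_mem _ fun i hi => Submodule.smul_mem _ _ (by
        rw [hW]
        exact Submodule.subset_span ⟨i, (Finset.mem_filter.mp hi).2, rfl⟩)
    · intro w hw
      rw [hW] at hw
      induction hw using Submodule.span_induction with
      | mem x hx =>
        obtain ⟨i, hi, rfl⟩ := hx
        rw [inner_sub_left]
        have h1 : (inner ℂ u (e i) : ℂ) = starRingEnd ℂ (c i) := by
          simp only [hc, OrthonormalBasis.repr_apply_apply]
          exact (inner_conj_symm u (e i)).symm
        have h2 : (inner ℂ (∑ j ∈ I, c j • e j) (e i) : ℂ) = starRingEnd ℂ (c i) := by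
          rw [e.orthonormal.inner_left_sum c (Finset.mem_filter.mpr ⟨Finset.mem_univ _, hi⟩)]
        rw [h1, h2, sub_self]
      | zero => simp
      | add x y _ _ hx hy => rw [inner_add_right, hx, hy, add_zero]
      | smul a x _ hx => rw [inner_smul_right, hx, mul_zero]
  -- coefficients of T u
  set d : Fin N → ℂ := fun i => if i ∈ I then -c i else c i with hd
  have hTu : u - (2 : ℂ) • (W.subtypeL.comp W.orthogonalProjection) u
      = ∑ i, d i • e i := by
    have hsum : u = ∑ i, c i • e i := (e.sum_repr u).symm
    have : (W.subtypeL.comp W.orthogonalProjection) u = ∑ i ∈ I, c i • e i := hproj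
    rw [this]
    conv_lhs => rw [hsum]
    rw [Finset.smul_sum, ← Finset.sum_filter_add_sum_filter_not Finset.univ (· ∈ I) (fun i => d i • e i)]
    have hIfilter : Finset.univ.filter (· ∈ I) = I := by
      ext i; simp [hI]
    rw [hIfilter]
    rw [← Finset.sum_filter_add_sum_filter_not Finset.univ (· ∈ I) (fun i => c i • e i), hIfilter]
    have h1 : ∀ i ∈ I, d i • e i = c i • e i - (2:ℂ) • c i • e i := by
      intro i hi; rw [hd]; simp only [if_pos hi]
      rw [neg_smul, two_smul]; abel
    have h2 : ∀ i ∈ Finset.univ.filter (¬ · ∈ I), d i • e i = c i • e i := by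
      intro i hi
      rw [hd]; simp only [if_neg (Finset.mem_filter.mp hi).2]
    rw [Finset.sum_congr rfl h1, Finset.sum_congr rfl h2, Finset.sum_sub_distrib]
    abel
  -- the full vector
  set x := u - (2 : ℂ) • (W.subtypeL.comp W.orthogonalProjection) u with hx
  have hSx : S x = ∑ i, ((μ i : ℂ) * d i) • e i := by
    rw [hTu, map_sum]
    refine Finset.sum_congr rfl fun i _ => ?_
    rw [map_smul, heig i, smul_smul, mul_comm]
  have hfull : x - (k:ℂ)^2 • S x = ∑ i, ((1 - (k:ℂ)^2 * (μ i : ℂ)) * d i) • e i := by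
    rw [hSx, hTu, Finset.smul_sum, ← Finset.sum_sub_distrib]
    refine Finset.sum_congr rfl fun i _ => ?_
    rw [smul_smul, ← sub_smul]
    ring_nf
  -- compute the inner product
  have hinner : (inner ℂ (x - (k:ℂ)^2 • S x) u : ℂ)
      = ∑ i, starRingEnd ℂ ((1 - (k:ℂ)^2 * (μ i : ℂ)) * d i) * c i := by
    rw [hfull, sum_inner]
    refine Finset.sum_congr rfl fun i _ => ?_
    rw [inner_smul_left]
    congr 1
    simp only [hc]
    exact (OrthonormalBasis.repr_apply_apply e u i).symm
  -- real part termwise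
  have hterm : ∀ i : Fin N,
      (starRingEnd ℂ ((1 - (k:ℂ)^2 * (μ i : ℂ)) * d i) * c i).re
        = |1 - k ^ 2 * μ i| * Complex.normSq (c i) := by
    intro i
    have hreal : starRingEnd ℂ ((1 - (k:ℂ)^2 * (μ i : ℂ))) = ((1 - k^2 * μ i : ℝ) : ℂ) := by
      push_cast
      rw [map_sub, map_one, map_mul]
      simp [Complex.conj_ofReal]
    have key : (starRingEnd ℂ) ((1 - (k:ℂ)^2 * (μ i:ℂ)) * d i) * c i
        = ((|1 - k^2*μ i| * Complex.normSq (c i) : ℝ) : ℂ) := by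
      rw [map_mul, hreal]
      by_cases hi : i ∈ I
      · have hneg : 1 - k ^ 2 * μ i < 0 := by
          have h1 : 1 / k ^ 2 < μ i := by
            have := Finset.mem_filter.mp (hI ▸ hi)
            exact this.2
          have := (div_lt_iff₀ hk2).mp h1
          linarith
        have hdi : d i = -c i := by simp only [hd, if_pos hi]
        rw [hdi, map_neg, abs_of_neg hneg, Complex.ofReal_mul, ← Complex.mul_conj]
        push_cast
        ring
      · have hpos' : 0 < 1 - k ^ 2 * μ i := by
          have h1 : ¬ (1 / k ^ 2 < μ i) := by
            intro h
            exact hi (hI ▸ Finset.mem_filter.mpr ⟨Finset.mem_univ _, h⟩)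
          have h2 : μ i ≤ 1 / k ^ 2 := le_of_not_gt h1
          have h3 : μ i < 1 / k ^ 2 := lt_of_le_of_ne h2 (fun h => hknotev i h.symm)
          have := (lt_div_iff₀ hk2).mp h3
          linarith
        have hdi : d i = c i := by simp only [hd, if_neg hi]
        rw [hdi, abs_of_pos hpos', Complex.ofReal_mul, ← Complex.mul_conj]
        push_cast
        ring
    rw [key, Complex.ofReal_re]
  have hre : (inner ℂ (x - (k:ℂ)^2 • S x) u : ℂ).re
      = ∑ i, |1 - k ^ 2 * μ i| * Complex.normSq (c i) := by
    rw [hinner, Complex.re_sum]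
    exact Finset.sum_congr rfl fun i _ => hterm i
  rw [hre]
  -- bound below
  have hnorm : ‖u‖ ^ 2 = ∑ i, Complex.normSq (c i) := by
    have := e.repr.norm_map u
    rw [← this, EuclideanSpace.norm_eq]
    rw [Real.sq_sqrt (by positivity)]
    refine Finset.sum_congr rfl fun i _ => ?_
    rw [hc, ← Complex.sq_norm]
  rw [hnorm, Finset.mul_sum]
  refine Finset.sum_le_sum fun i _ => ?_
  have hγle : γ ≤ |1 - k ^ 2 * μ i| := Finset.inf'_le _ (Finset.mem_univ i)
  exact mul_le_mul_of_nonneg_right hγle (Complex.normSq_nonneg _)
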